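/- arXiv:1502.06919 — 2 statements merged into one kernel-verified Lean document; each statement's English description precedes it below -/
import Mathlib

section
/- For any pair of matrices X, X̃ ∈ ℝ^{m₁×m₂}, ‖P_X(X̃)‖_{σ,1} ≤ √(2·rank(X)) · ‖X̃‖_{σ,2}. -/
open MeasureTheory ProbabilityTheory Matrix

/-- Singular values of a rectangular real matrix: square roots of the
eigenvalues of `Xᵀ * X`. -/
noncomputable def singVals {m₁ m₂ : ℕ} (X : Matrix (Fin m₁) (Fin m₂) ℝ) : Fin m₂ → ℝ :=
  fun i => Real.sqrt ((show (Xᵀ * X).IsHermitian by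
    simpa [Matrix.conjTranspose_eq_transpose_of_trivial] using
      Matrix.isHermitian_conjTranspose_mul_self X).eigenvalues i)

/-- Nuclear (Schatten-1) norm `‖·‖_{σ,1}`. -/
noncomputable def nucNorm {m₁ m₂ : ℕ} (X : Matrix (Fin m₁) (Fin m₂) ℝ) : ℝ :=
  ∑ i, singVals X i

/-- Operator (Schatten-∞) norm `‖·‖_{σ,∞}`: the largest singular value. -/
noncomputable def opNorm {m₁ m₂ : ℕ} (X : Matrix (Fin m₁) (Fin m₂) ℝ) : ℝ :=
  ⨆ i, singVals X i

/-- Frobenius (Schatten-2) norm `‖·‖_{σ,2}`. -/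
noncomputable def frobNorm {m₁ m₂ : ℕ} (X : Matrix (Fin m₁) (Fin m₂) ℝ) : ℝ :=
  Real.sqrt (∑ k, ∑ l, (X k l) ^ 2)

/-- Entrywise sup norm `‖·‖_∞`. -/
noncomputable def linfNorm {m₁ m₂ : ℕ} (X : Matrix (Fin m₁) (Fin m₂) ℝ) : ℝ :=
  ⨆ p : Fin m₁ × Fin m₂, |X p.1 p.2|

/-- The matrix of the orthogonal projection onto a subspace `S` of `ℝ^k`. -/
noncomputable def projM {k : ℕ} (S : Submodule ℝ (EuclideanSpace ℝ (Fin k))) :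
    Matrix (Fin k) (Fin k) ℝ :=
  LinearMap.toMatrix (EuclideanSpace.basisFun (Fin k) ℝ).toBasis
    (EuclideanSpace.basisFun (Fin k) ℝ).toBasis
    (S.subtype ∘ₗ (S.orthogonalProjectionOnto).toLinearMap)

/-- The span `S₁(X)` of the left singular vectors of `X`, i.e. its column space
(`S₂(X)`, the span of the right singular vectors, is `colSpace Xᵀ`). -/
noncomputable def colSpace {m₁ m₂ : ℕ} (X : Matrix (Fin m₁) (Fin m₂) ℝ) :
    Submodule ℝ (EuclideanSpace ℝ (Fin m₁)) :=
  LinearMap.range (Matrix.toEuclideanLin X)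

/-- The projection `P⊥_X(T) = P_{S₁(X)⊥} T P_{S₂(X)⊥}`. -/
noncomputable def Pperp {m₁ m₂ : ℕ} (X T : Matrix (Fin m₁) (Fin m₂) ℝ) :
    Matrix (Fin m₁) (Fin m₂) ℝ :=
  projM (Submodule.orthogonal (colSpace X)) * T * projM (Submodule.orthogonal (colSpace Xᵀ))

/-- The projection `P_X(T) = T - P⊥_X(T)`. -/
noncomputable def Ppar {m₁ m₂ : ℕ} (X T : Matrix (Fin m₁) (Fin m₂) ℝ) :
    Matrix (Fin m₁) (Fin m₂) ℝ :=
  T - Pperp X T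


section AuxProofs

open Module

lemma sum_eig_aux {n : ℕ} (A : Matrix (Fin n) (Fin n) ℝ) (hA : A.IsHermitian) :
    ∑ i, hA.eigenvalues i = A.trace := by
  rw [hA.trace_eq_sum_eigenvalues]
  simp

lemma frob_sq_eq_trace_aux {m₁ m₂ : ℕ} (M : Matrix (Fin m₁) (Fin m₂) ℝ) :
    ∑ k, ∑ l, (M k l) ^ 2 = (Mᴴ * M).trace := by
  rw [Finset.sum_comm]
  simp [Matrix.trace, Matrix.mul_apply, Matrix.diag, sq, Matrix.conjTranspose_apply]

lemma frob_sq_eq_traceT_aux {m₁ m₂ : ℕ} (M : Matrix (Fin m₁) (Fin m₂) ℝ) :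
    ∑ k, ∑ l, (M k l) ^ 2 = (Mᵀ * M).trace := by
  rw [Finset.sum_comm]
  simp [Matrix.trace, Matrix.mul_apply, Matrix.diag, sq, Matrix.transpose_apply]

lemma sum_singVals_sq_aux {m₁ m₂ : ℕ} (M : Matrix (Fin m₁) (Fin m₂) ℝ) :
    ∑ i, singVals M i ^ 2 = ∑ k, ∑ l, (M k l) ^ 2 := by
  rw [frob_sq_eq_trace_aux, ← sum_eig_aux _ (Matrix.isHermitian_conjTranspose_mul_self M)]
  refine Finset.sum_congr rfl fun i _ => ?_
  exact Real.sq_sqrt (Matrix.eigenvalues_conjTranspose_mul_self_nonneg M i)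

lemma frobNorm_sq_aux {m₁ m₂ : ℕ} (M : Matrix (Fin m₁) (Fin m₂) ℝ) :
    frobNorm M ^ 2 = ∑ k, ∑ l, (M k l) ^ 2 := by
  rw [frobNorm, Real.sq_sqrt]
  positivity

lemma nucNorm_le_sqrt_rank_mul_frob {m₁ m₂ : ℕ} (M : Matrix (Fin m₁) (Fin m₂) ℝ) :
    nucNorm M ≤ Real.sqrt (M.rank) * frobNorm M := by
  classical
  have hsv : ∀ i, 0 ≤ singVals M i := fun i => Real.sqrt_nonneg _
  set s := Finset.univ.filter (fun i => singVals M i ≠ 0) with hs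
  have h1 : nucNorm M = ∑ i ∈ s, singVals M i := (Finset.sum_filter_ne_zero _).symm
  have hcard : s.card = M.rank := by
    have : s.card = Fintype.card
        {i // (Matrix.isHermitian_conjTranspose_mul_self M).eigenvalues i ≠ 0} := by
      rw [Fintype.card_subtype]
      congr 1
      apply Finset.filter_congr
      intro i _
      constructor
      · intro h h0; exact h (by simp only [singVals]; exact Real.sqrt_eq_zero_of_nonpos h0.le)
      · intro h h0
        exact h (by
          have := Real.sqrt_eq_zero (Matrix.eigenvalues_conjTranspose_mul_self_nonneg M i)
          exact this.mp h0)
    rw [this, ← (Matrix.isHermitian_conjTranspose_mul_self M).rank_eq_card_non_zero_eigs,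
      Matrix.rank_conjTranspose_mul_self]
  have hcs : (∑ i ∈ s, singVals M i) ^ 2 ≤ (M.rank : ℝ) * frobNorm M ^ 2 := by
    calc (∑ i ∈ s, singVals M i) ^ 2 ≤ (s.card : ℝ) * ∑ i ∈ s, singVals M i ^ 2 :=
          sq_sum_le_card_mul_sum_sq
      _ ≤ (s.card : ℝ) * ∑ i, singVals M i ^ 2 := by
          apply mul_le_mul_of_nonneg_left _ (by positivity)
          exact Finset.sum_le_sum_of_subset_of_nonneg (Finset.subset_univ _)
            (fun i _ _ => sq_nonneg _)
      _ = (M.rank : ℝ) * frobNorm M ^ 2 := by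
          rw [hcard, sum_singVals_sq_aux, frobNorm_sq_aux]
  have hnn : 0 ≤ nucNorm M := Finset.sum_nonneg fun i _ => hsv i
  have hsq : nucNorm M ^ 2 ≤ (Real.sqrt (M.rank) * frobNorm M) ^ 2 := by
    rw [mul_pow, Real.sq_sqrt (by positivity)]
    rw [h1]; exact hcs
  have hb : 0 ≤ Real.sqrt (M.rank) * frobNorm M :=
    mul_nonneg (Real.sqrt_nonneg _) (Real.sqrt_nonneg _)
  exact (pow_le_pow_iff_left₀ hnn hb (by norm_num)).mp hsq

-- projection matrix facts

lemma projM_comp_eq {k : ℕ} (S : Submodule ℝ (EuclideanSpace ℝ (Fin k))) :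
    (S.subtype ∘ₗ (S.orthogonalProjectionOnto).toLinearMap) ∘ₗ
    (S.subtype ∘ₗ (S.orthogonalProjectionOnto).toLinearMap)
    = S.subtype ∘ₗ (S.orthogonalProjectionOnto).toLinearMap := by
  ext x
  simp [Submodule.orthogonalProjectionOnto_mem_subspace_eq_self]
  rw [← ContinuousLinearMap.mul_apply, S.isIdempotentElem_starProjection.eq]

lemma projM_mul_projM {k : ℕ} (S : Submodule ℝ (EuclideanSpace ℝ (Fin k))) :
    projM S * projM S = projM S := by
  rw [projM, ← LinearMap.toMatrix_comp _ (EuclideanSpace.basisFun (Fin k) ℝ).toBasis,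
    projM_comp_eq]

lemma projM_symm_aux {k : ℕ} (S : Submodule ℝ (EuclideanSpace ℝ (Fin k))) :
    ∀ x y, @inner ℝ _ _ ((S.subtype ∘ₗ (S.orthogonalProjectionOnto).toLinearMap) x) y
    = @inner ℝ _ _ x ((S.subtype ∘ₗ (S.orthogonalProjectionOnto).toLinearMap) y) := by
  intro x y
  exact (S.starProjection_isSymmetric) x y

lemma projM_apply {k : ℕ} (S : Submodule ℝ (EuclideanSpace ℝ (Fin k))) (i j : Fin k) :
    projM S i j = (S.subtype ∘ₗ (S.orthogonalProjectionOnto).toLinearMap)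
      ((EuclideanSpace.basisFun (Fin k) ℝ).toBasis j) i := by
  rw [projM, LinearMap.toMatrix_apply]
  rfl

lemma projM_transpose {k : ℕ} (S : Submodule ℝ (EuclideanSpace ℝ (Fin k))) :
    (projM S)ᵀ = projM S := by
  ext i j
  rw [Matrix.transpose_apply, projM_apply, projM_apply]
  have h1 : ∀ (x : EuclideanSpace ℝ (Fin k)) (i : Fin k),
      x i = @inner ℝ _ _ ((EuclideanSpace.basisFun (Fin k) ℝ).toBasis i) x := by
    intro x i
    simp [OrthonormalBasis.coe_toBasis, EuclideanSpace.basisFun_apply,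
      EuclideanSpace.inner_single_left]
  exact (h1 _ j).trans ((real_inner_comm _ _).trans
    ((projM_symm_aux S _ _).trans (h1 _ i).symm))

lemma projM_add_orth {k : ℕ} (S : Submodule ℝ (EuclideanSpace ℝ (Fin k))) :
    projM S + projM Sᗮ = 1 := by
  rw [projM, projM, ← map_add]
  have h : (S.subtype ∘ₗ (S.orthogonalProjectionOnto).toLinearMap)
      + (Sᗮ.subtype ∘ₗ (Sᗮ.orthogonalProjectionOnto).toLinearMap) = LinearMap.id := by
    refine LinearMap.ext fun x => ?_
    exact S.starProjection_add_starProjection_orthogonal x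
  rw [h, LinearMap.toMatrix_id]

lemma rank_projM {k : ℕ} (S : Submodule ℝ (EuclideanSpace ℝ (Fin k))) :
    (projM S).rank = Module.finrank ℝ S := by
  rw [Matrix.rank_eq_finrank_range_toLin (projM S)
    (EuclideanSpace.basisFun (Fin k) ℝ).toBasis (EuclideanSpace.basisFun (Fin k) ℝ).toBasis,
    projM, Matrix.toLin_toMatrix]
  have h : LinearMap.range (S.subtype ∘ₗ (S.orthogonalProjectionOnto).toLinearMap) = S := by
    rw [LinearMap.range_comp]
    have h2 : LinearMap.range (S.orthogonalProjectionOnto).toLinearMap = ⊤ := by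
      rw [LinearMap.range_eq_top]
      intro y
      exact ⟨(y : EuclideanSpace ℝ (Fin k)), by
        simp [Submodule.orthogonalProjectionOnto_mem_subspace_eq_self]⟩
    rw [h2, Submodule.map_top, Submodule.range_subtype]
  rw [h]

lemma finrank_colSpace {m₁ m₂ : ℕ} (X : Matrix (Fin m₁) (Fin m₂) ℝ) :
    Module.finrank ℝ (colSpace X) = X.rank := by
  rw [Matrix.rank_eq_finrank_range_toLin X
    (EuclideanSpace.basisFun (Fin m₁) ℝ).toBasis (EuclideanSpace.basisFun (Fin m₂) ℝ).toBasis]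
  rfl

lemma matrix_rank_add_le {n m : ℕ} (A B : Matrix (Fin n) (Fin m) ℝ) :
    (A + B).rank ≤ A.rank + B.rank := by
  have h : LinearMap.range (A + B).mulVecLin ≤
      LinearMap.range A.mulVecLin ⊔ LinearMap.range B.mulVecLin := by
    rintro x ⟨y, rfl⟩
    rw [Matrix.mulVecLin_add]
    exact Submodule.add_mem_sup ⟨y, rfl⟩ ⟨y, rfl⟩
  calc (A + B).rank ≤ Module.finrank ℝ
        ↥(LinearMap.range A.mulVecLin ⊔ LinearMap.range B.mulVecLin) :=
        Submodule.finrank_mono h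
    _ ≤ A.rank + B.rank := by
        have := Submodule.finrank_sup_add_finrank_inf_eq
          (LinearMap.range A.mulVecLin) (LinearMap.range B.mulVecLin)
        unfold Matrix.rank
        omega

lemma Ppar_decomp {m₁ m₂ : ℕ} (X T : Matrix (Fin m₁) (Fin m₂) ℝ) :
    Ppar X T = projM (colSpace X) * T
      + projM (colSpace X)ᗮ * T * projM (colSpace Xᵀ) := by
  have h1 : projM (colSpace X) = 1 - projM (colSpace X)ᗮ :=
    eq_sub_of_add_eq (projM_add_orth _)
  have h2 : projM (colSpace Xᵀ) = 1 - projM (colSpace Xᵀ)ᗮ :=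
    eq_sub_of_add_eq (projM_add_orth _)
  rw [Ppar, Pperp, h1, h2, Matrix.sub_mul, Matrix.mul_sub, Matrix.one_mul, Matrix.mul_one]
  abel

lemma rank_Ppar_le {m₁ m₂ : ℕ} (X T : Matrix (Fin m₁) (Fin m₂) ℝ) :
    (Ppar X T).rank ≤ 2 * X.rank := by
  rw [Ppar_decomp]
  calc (projM (colSpace X) * T
        + projM (colSpace X)ᗮ * T * projM (colSpace Xᵀ)).rank
      ≤ (projM (colSpace X) * T).rank
        + (projM (colSpace X)ᗮ * T * projM (colSpace Xᵀ)).rank :=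
        matrix_rank_add_le _ _
    _ ≤ (projM (colSpace X)).rank + (projM (colSpace Xᵀ)).rank :=
        Nat.add_le_add (Matrix.rank_mul_le_left _ _) (Matrix.rank_mul_le_right _ _)
    _ = X.rank + Xᵀ.rank := by rw [rank_projM, rank_projM, finrank_colSpace, finrank_colSpace]
    _ = 2 * X.rank := by rw [Matrix.rank_transpose]; ring

lemma trace_proj_aux {n m : ℕ} (T : Matrix (Fin n) (Fin m) ℝ) (P : Matrix (Fin n) (Fin n) ℝ)
    (Q : Matrix (Fin m) (Fin m) ℝ) (hPt : Pᵀ = P) (hQt : Qᵀ = Q)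
    (hPP : P * P = P) (hQQ : Q * Q = Q) :
    ((P * T * Q)ᵀ * (P * T * Q)).trace = (Tᵀ * (P * T * Q)).trace := by
  have e1 : (P * T * Q)ᵀ * (P * T * Q) = Q * ((Tᵀ * P * T) * Q) := by
    simp only [Matrix.transpose_mul, hPt, hQt, Matrix.mul_assoc]
    rw [← Matrix.mul_assoc P P, hPP]
  rw [e1, Matrix.trace_mul_comm, Matrix.mul_assoc, hQQ, ← Matrix.mul_assoc,
    Matrix.mul_assoc (Tᵀ * P)]
  simp [Matrix.mul_assoc]

lemma frob_trace_sub_le {n m : ℕ} (T A : Matrix (Fin n) (Fin m) ℝ)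
    (h : (Aᵀ * A).trace = (Tᵀ * A).trace) :
    ((T - A)ᵀ * (T - A)).trace ≤ (Tᵀ * T).trace := by
  have hAT : (Aᵀ * T).trace = (Tᵀ * A).trace := by
    rw [← Matrix.trace_transpose (Aᵀ * T), Matrix.transpose_mul, Matrix.transpose_transpose]
  have expand : ((T - A)ᵀ * (T - A)).trace
      = (Tᵀ * T).trace - (Tᵀ * A).trace - (Aᵀ * T).trace + (Aᵀ * A).trace := by
    rw [Matrix.transpose_sub, Matrix.sub_mul, Matrix.mul_sub, Matrix.mul_sub]
    simp [Matrix.trace_sub]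
    ring
  have hnn : 0 ≤ (Aᵀ * A).trace := by
    rw [Matrix.trace]
    refine Finset.sum_nonneg fun i _ => ?_
    simp only [Matrix.diag_apply, Matrix.mul_apply, Matrix.transpose_apply]
    exact Finset.sum_nonneg fun j _ => mul_self_nonneg _
  rw [expand, hAT, h]
  linarith

lemma frobNorm_Ppar_le {m₁ m₂ : ℕ} (X T : Matrix (Fin m₁) (Fin m₂) ℝ) :
    frobNorm (Ppar X T) ≤ frobNorm T := by
  rw [frobNorm, frobNorm]
  apply Real.sqrt_le_sqrt
  rw [frob_sq_eq_traceT_aux, frob_sq_eq_traceT_aux]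
  rw [Ppar, Pperp]
  exact frob_trace_sub_le T _ (trace_proj_aux T _ _ (projM_transpose _) (projM_transpose _)
    (projM_mul_projM _) (projM_mul_projM _))

end AuxProofs

/-- Lemma 1(ii): `‖P_X(X̃)‖_{σ,1} ≤ √(2 rank X) ‖X̃‖_{σ,2}`. -/
theorem nucNorm_Ppar_le (m₁ m₂ : ℕ) (X Xt : Matrix (Fin m₁) (Fin m₂) ℝ) :
    nucNorm (Ppar X Xt) ≤ Real.sqrt (2 * (X.rank : ℝ)) * frobNorm Xt := by
  calc nucNorm (Ppar X Xt) ≤ Real.sqrt ((Ppar X Xt).rank) * frobNorm (Ppar X Xt) :=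
        nucNorm_le_sqrt_rank_mul_frob _
    _ ≤ Real.sqrt (2 * (X.rank : ℝ)) * frobNorm Xt := by
        apply mul_le_mul
        · apply Real.sqrt_le_sqrt
          have := rank_Ppar_le X Xt
          exact_mod_cast this
        · exact frobNorm_Ppar_le X Xt
        · exact Real.sqrt_nonneg _
        · exact Real.sqrt_nonneg _
end

section
/- For any pair of matrices X, X̃ ∈ ℝ^{m₁×m₂}, ‖X‖_{σ,1} − ‖X̃‖_{σ,1} ≤ ‖P_X(X̃ − X)‖_{σ,1}. -/
open MeasureTheory ProbabilityTheory Matrix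

namespace NucAux

theorem hermT {m₁ m₂ : ℕ} (X : Matrix (Fin m₁) (Fin m₂) ℝ) : (Xᵀ * X).IsHermitian := by
  simpa [Matrix.conjTranspose_eq_transpose_of_trivial] using
    Matrix.isHermitian_conjTranspose_mul_self X

lemma projM_mulVec {k : ℕ} (S : Submodule ℝ (EuclideanSpace ℝ (Fin k)))
    (x : EuclideanSpace ℝ (Fin k)) :
    projM S *ᵥ (x : Fin k → ℝ) = ((Submodule.orthogonalProjectionOnto S) x : EuclideanSpace ℝ (Fin k)) := by
  have h := LinearMap.toMatrix_mulVec_repr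
    (EuclideanSpace.basisFun (Fin k) ℝ).toBasis (EuclideanSpace.basisFun (Fin k) ℝ).toBasis
    (S.subtype ∘ₗ ((Submodule.orthogonalProjectionOnto S)).toLinearMap) x
  have h1 : ((EuclideanSpace.basisFun (Fin k) ℝ).toBasis.repr x : Fin k → ℝ) = x := by
    ext i
    rw [OrthonormalBasis.coe_toBasis_repr_apply, EuclideanSpace.basisFun_repr]
  have h2 : ((EuclideanSpace.basisFun (Fin k) ℝ).toBasis.repr
      ((S.subtype ∘ₗ ((Submodule.orthogonalProjectionOnto S)).toLinearMap) x) : Fin k → ℝ)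
      = ((Submodule.orthogonalProjectionOnto S) x : EuclideanSpace ℝ (Fin k)) := by
    ext i
    rw [OrthonormalBasis.coe_toBasis_repr_apply, EuclideanSpace.basisFun_repr]
    rfl
  rw [projM, ← h1, h, h2]

lemma projM_apply {k : ℕ} (S : Submodule ℝ (EuclideanSpace ℝ (Fin k))) (i j : Fin k) :
    projM S i j = ((Submodule.orthogonalProjectionOnto S) (EuclideanSpace.single j 1) : EuclideanSpace ℝ (Fin k)) i := by
  have h := projM_mulVec S (EuclideanSpace.single j 1)
  have h2 : ((EuclideanSpace.single j 1 : EuclideanSpace ℝ (Fin k)) : Fin k → ℝ) = Pi.single j 1 := by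
    ext l; simp [EuclideanSpace.single_apply, Pi.single_apply]
  rw [h2] at h
  have := congrFun h i
  simpa [mulVec_single] using this

lemma projM_symm {k : ℕ} (S : Submodule ℝ (EuclideanSpace ℝ (Fin k))) (i j : Fin k) :
    projM S i j = projM S j i := by
  rw [projM_apply, projM_apply]
  have h1 : ((Submodule.orthogonalProjectionOnto S) (EuclideanSpace.single j 1) : EuclideanSpace ℝ (Fin k)) i
      = inner (𝕜 := ℝ) (EuclideanSpace.single i (1:ℝ)) (((Submodule.orthogonalProjectionOnto S) (EuclideanSpace.single j 1) : EuclideanSpace ℝ (Fin k))) := by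
    rw [EuclideanSpace.inner_single_left]; simp
  have h2 : ((Submodule.orthogonalProjectionOnto S) (EuclideanSpace.single i 1) : EuclideanSpace ℝ (Fin k)) j
      = inner (𝕜 := ℝ) (((Submodule.orthogonalProjectionOnto S) (EuclideanSpace.single i 1) : EuclideanSpace ℝ (Fin k))) (EuclideanSpace.single j (1:ℝ)) := by
    rw [EuclideanSpace.inner_single_right]; simp
  rw [h1, h2]
  exact (Submodule.inner_starProjection_left_eq_right S _ _).symm

lemma projM_contr {k : ℕ} (S : Submodule ℝ (EuclideanSpace ℝ (Fin k))) (v : Fin k → ℝ) :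
    (projM S *ᵥ v) ⬝ᵥ (projM S *ᵥ v) ≤ v ⬝ᵥ v := by
  have key : ∀ w : EuclideanSpace ℝ (Fin k), ‖w‖ ^ 2 = (w : Fin k → ℝ) ⬝ᵥ (w : Fin k → ℝ) := by
    intro w
    rw [EuclideanSpace.norm_eq, Real.sq_sqrt (by positivity)]
    simp [dotProduct, sq, Real.norm_eq_abs, abs_mul_abs_self]
  have main : ∀ x : EuclideanSpace ℝ (Fin k),
      (projM S *ᵥ (x : Fin k → ℝ)) ⬝ᵥ (projM S *ᵥ (x : Fin k → ℝ))
        ≤ (x : Fin k → ℝ) ⬝ᵥ (x : Fin k → ℝ) := by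
    intro x
    rw [projM_mulVec]
    have hn : ‖((Submodule.orthogonalProjectionOnto S) x : EuclideanSpace ℝ (Fin k))‖ ≤ ‖x‖ := by
      have h2 := ((Submodule.orthogonalProjectionOnto S)).le_opNorm x
      have h1 := Submodule.orthogonalProjectionOnto_norm_le S
      have : ‖((Submodule.orthogonalProjectionOnto S) x : EuclideanSpace ℝ (Fin k))‖
          = ‖(Submodule.orthogonalProjectionOnto S) x‖ := rfl
      rw [this]
      nlinarith [norm_nonneg x, norm_nonneg ((Submodule.orthogonalProjectionOnto S) x)]
    have hsq := pow_le_pow_left₀ (norm_nonneg _) hn 2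
    rw [key, key] at hsq
    exact hsq
  exact main (WithLp.toLp 2 v)

lemma projM_mul_orthogonal {k : ℕ} (S : Submodule ℝ (EuclideanSpace ℝ (Fin k))) :
    projM S * projM Sᗮ = 0 := by
  ext i j
  have hcol : (fun l => projM Sᗮ l j)
      = (((Submodule.orthogonalProjectionOnto Sᗮ) (EuclideanSpace.single j 1) : EuclideanSpace ℝ (Fin k)) : Fin k → ℝ) := by
    have h := projM_mulVec Sᗮ (EuclideanSpace.single j 1)
    have h2 : ((EuclideanSpace.single j 1 : EuclideanSpace ℝ (Fin k)) : Fin k → ℝ) = Pi.single j 1 := by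
      ext l; simp [EuclideanSpace.single_apply, Pi.single_apply]
    rw [h2] at h
    simp only [mulVec_single, mul_one] at h
    rw [← h]; ext l; simp
  have : (projM S * projM Sᗮ) i j = (projM S *ᵥ (fun l => projM Sᗮ l j)) i := by
    simp [mul_apply, mulVec, dotProduct]
  rw [this, hcol, projM_mulVec S]
  have hz : (Submodule.orthogonalProjectionOnto S)
      (((Submodule.orthogonalProjectionOnto Sᗮ) (EuclideanSpace.single j 1) : EuclideanSpace ℝ (Fin k))) = 0 :=
    Submodule.orthogonalProjectionOnto_apply_of_mem_orthogonal (SetLike.coe_mem _)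
  rw [hz]
  simp

lemma projM_fix_mul {m₁ m₂ : ℕ} (X : Matrix (Fin m₁) (Fin m₂) ℝ) :
    projM (colSpace X) * X = X := by
  ext i j
  have hcol : (fun l => X l j) = ((X *ᵥ Pi.single j 1 : Fin m₁ → ℝ)) := by
    ext l; simp [mulVec, dotProduct, Pi.single_apply]
  have hmem : WithLp.toLp 2 (X *ᵥ Pi.single j 1 : Fin m₁ → ℝ) ∈ colSpace X := by
    refine ⟨WithLp.toLp 2 (Pi.single j 1 : Fin m₂ → ℝ), ?_⟩
    rfl
  have : (projM (colSpace X) * X) i j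
      = (projM (colSpace X) *ᵥ ((X *ᵥ Pi.single j 1 : Fin m₁ → ℝ))) i := by
    simp [mul_apply, mulVec, dotProduct, Pi.single_apply]
  rw [this, ← WithLp.ofLp_toLp 2 (X *ᵥ Pi.single j 1), projM_mulVec (colSpace X) (WithLp.toLp 2 (X *ᵥ Pi.single j 1 : Fin m₁ → ℝ))]
  rw [← Submodule.starProjection_apply, Submodule.starProjection_eq_self_iff.mpr hmem]
  simp [mulVec, dotProduct, Pi.single_apply]

section eig
variable {m₁ m₂ : ℕ} (A : Matrix (Fin m₁) (Fin m₂) ℝ)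

noncomputable def eVec (i : Fin m₂) : Fin m₂ → ℝ :=
  ⇑((hermT A).eigenvectorBasis i)

lemma transpose_eq_conjT : Aᴴ = Aᵀ := by
  ext i j; simp [conjTranspose_apply]

lemma eVec_dot (i j : Fin m₂) : eVec A i ⬝ᵥ eVec A j = if i = j then 1 else 0 := by
  set hA := hermT A
  have hu : (star (hA.eigenvectorUnitary : Matrix (Fin m₂) (Fin m₂) ℝ))
      * (hA.eigenvectorUnitary : Matrix (Fin m₂) (Fin m₂) ℝ) = 1 :=
    mem_unitaryGroup_iff'.mp (hA.eigenvectorUnitary).2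
  have h := congrFun (congrFun hu i) j
  simp only [Matrix.mul_apply, Matrix.one_apply] at h
  rw [← h]
  simp [dotProduct, Matrix.star_apply, Matrix.IsHermitian.eigenvectorUnitary_apply, eVec, mul_comm]

lemma eVec_VVT (k l : Fin m₂) :
    (∑ i, eVec A i k * eVec A i l) = if k = l then 1 else 0 := by
  set hA := hermT A
  have hu : (hA.eigenvectorUnitary : Matrix (Fin m₂) (Fin m₂) ℝ)
      * (star (hA.eigenvectorUnitary : Matrix (Fin m₂) (Fin m₂) ℝ)) = 1 :=
    mem_unitaryGroup_iff.mp (hA.eigenvectorUnitary).2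
  have h := congrFun (congrFun hu k) l
  simp only [Matrix.mul_apply, Matrix.one_apply, Matrix.star_apply] at h
  rw [← h]
  apply Finset.sum_congr rfl
  intro i _
  simp [Matrix.IsHermitian.eigenvectorUnitary_apply, eVec]

lemma eVec_parseval (x y : Fin m₂ → ℝ) :
    x ⬝ᵥ y = ∑ i, (x ⬝ᵥ eVec A i) * (eVec A i ⬝ᵥ y) := by
  symm
  calc ∑ i, (x ⬝ᵥ eVec A i) * (eVec A i ⬝ᵥ y)
      = ∑ i, ∑ k, ∑ l, x k * eVec A i k * (eVec A i l * y l) := by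
        apply Finset.sum_congr rfl; intro i _
        rw [dotProduct, dotProduct, Finset.sum_mul_sum]
    _ = ∑ k, ∑ l, (∑ i, eVec A i k * eVec A i l) * (x k * y l) := by
        rw [Finset.sum_comm]
        apply Finset.sum_congr rfl; intro k _
        rw [Finset.sum_comm]
        apply Finset.sum_congr rfl; intro l _
        rw [Finset.sum_mul]
        apply Finset.sum_congr rfl; intro i _; ring
    _ = x ⬝ᵥ y := by
        simp only [eVec_VVT, ite_mul, one_mul, zero_mul]
        simp [dotProduct]

lemma eVec_Av_dot (i j : Fin m₂) :
    (A *ᵥ eVec A i) ⬝ᵥ (A *ᵥ eVec A j)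
      = if i = j then (hermT A).eigenvalues i else 0 := by
  set hA := hermT A
  have h1 : eVec A i ⬝ᵥ ((Aᴴ * A) *ᵥ eVec A j) = (A *ᵥ eVec A i) ⬝ᵥ (A *ᵥ eVec A j) := by
    rw [transpose_eq_conjT, ← mulVec_mulVec, dotProduct_mulVec, vecMul_transpose]
  rw [← h1]
  have h2 : (Aᴴ * A) *ᵥ eVec A j = hA.eigenvalues j • eVec A j := hA.mulVec_eigenvectorBasis j
  rw [h2]
  have h3 : eVec A i ⬝ᵥ (hA.eigenvalues j • eVec A j)
      = hA.eigenvalues j * (eVec A i ⬝ᵥ eVec A j) := by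
    rw [dotProduct, dotProduct, Finset.mul_sum]
    apply Finset.sum_congr rfl; intro k _; simp [Pi.smul_apply]; ring
  rw [h3, eVec_dot]
  by_cases h : i = j <;> simp [h]

lemma singVals_nonneg (i : Fin m₂) : 0 ≤ singVals A i := Real.sqrt_nonneg _

lemma singVals_sq (i : Fin m₂) :
    singVals A i ^ 2 = (hermT A).eigenvalues i :=
  Real.sq_sqrt (Matrix.eigenvalues_conjTranspose_mul_self_nonneg A i)

noncomputable def uVec (i : Fin m₂) : Fin m₁ → ℝ :=
  if singVals A i = 0 then 0 else (singVals A i)⁻¹ • (A *ᵥ eVec A i)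

lemma mulVec_eVec_eq (i : Fin m₂) : A *ᵥ eVec A i = singVals A i • uVec A i := by
  by_cases h : singVals A i = 0
  · have hmu : (hermT A).eigenvalues i = 0 := by
      rw [← singVals_sq A i, h]; ring
    have h0 : (A *ᵥ eVec A i) ⬝ᵥ (A *ᵥ eVec A i) = 0 := by
      rw [eVec_Av_dot]; simp [hmu]
    rw [dotProduct_self_eq_zero.mp h0, h, zero_smul]
  · rw [uVec, if_neg h, smul_smul, mul_inv_cancel₀ h, one_smul]

lemma uVec_dot (i j : Fin m₂) :
    uVec A i ⬝ᵥ uVec A j = if i = j ∧ singVals A i ≠ 0 then 1 else 0 := by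
  by_cases hi : singVals A i = 0
  · rw [uVec, if_pos hi]; simp [hi]
  · by_cases hj : singVals A j = 0
    · rw [uVec, uVec, if_neg hi, if_pos hj]
      rw [if_neg (fun h : i = j ∧ singVals A i ≠ 0 => hi (h.1 ▸ hj))]
      simp [hj]
    · rw [uVec, uVec, if_neg hi, if_neg hj, smul_dotProduct, dotProduct_smul,
        eVec_Av_dot, smul_eq_mul, smul_eq_mul]
      by_cases h : i = j
      · subst h
        rw [if_pos rfl, if_pos ⟨rfl, hi⟩, ← singVals_sq A i]
        field_simp
      · rw [if_neg h, if_neg (by simp [h])]; ring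

end eig

def ipF {p q : ℕ} (A B : Matrix (Fin p) (Fin q) ℝ) : ℝ := ∑ k, ∑ l, A k l * B k l

def Contr {p q : ℕ} (B : Matrix (Fin p) (Fin q) ℝ) : Prop :=
  ∀ v : Fin q → ℝ, (B *ᵥ v) ⬝ᵥ (B *ᵥ v) ≤ v ⬝ᵥ v

section eig2
variable {m₁ m₂ : ℕ} (A : Matrix (Fin m₁) (Fin m₂) ℝ)

lemma dot_self_nonneg {p : ℕ} (x : Fin p → ℝ) : (0:ℝ) ≤ x ⬝ᵥ x :=
  Finset.sum_nonneg fun i _ => mul_self_nonneg _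

lemma ip_expand (B : Matrix (Fin m₁) (Fin m₂) ℝ) :
    ipF A B = ∑ i, (A *ᵥ eVec A i) ⬝ᵥ (B *ᵥ eVec A i) := by
  unfold ipF
  calc ∑ k, ∑ l, A k l * B k l
      = ∑ k, ∑ i, ((A k) ⬝ᵥ eVec A i) * (eVec A i ⬝ᵥ (B k)) := by
        exact Finset.sum_congr rfl fun k _ => eVec_parseval A (A k) (B k)
    _ = ∑ i, ∑ k, ((A k) ⬝ᵥ eVec A i) * (eVec A i ⬝ᵥ (B k)) := Finset.sum_comm
    _ = ∑ i, (A *ᵥ eVec A i) ⬝ᵥ (B *ᵥ eVec A i) := by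
        apply Finset.sum_congr rfl; intro i _
        rw [dotProduct]
        apply Finset.sum_congr rfl; intro k _
        rw [dotProduct_comm (eVec A i) (B k)]
        rfl

lemma dual_le (B : Matrix (Fin m₁) (Fin m₂) ℝ) (hB : Contr B) : ipF A B ≤ nucNorm A := by
  rw [ip_expand, nucNorm]
  apply Finset.sum_le_sum
  intro i _
  rw [mulVec_eVec_eq, smul_dotProduct, smul_eq_mul]
  have hσ := singVals_nonneg A i
  have key : uVec A i ⬝ᵥ (B *ᵥ eVec A i) ≤ 1 := by
    have huu : uVec A i ⬝ᵥ uVec A i ≤ 1 := by rw [uVec_dot]; split <;> norm_num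
    have hBv : (B *ᵥ eVec A i) ⬝ᵥ (B *ᵥ eVec A i) ≤ 1 := by
      have h2 := hB (eVec A i)
      rw [eVec_dot, if_pos rfl] at h2
      exact h2
    have hcs := Finset.sum_mul_sq_le_sq_mul_sq Finset.univ (uVec A i) (B *ᵥ eVec A i)
    have e1 : (∑ k, uVec A i k ^ 2) = uVec A i ⬝ᵥ uVec A i := by simp [dotProduct, sq]
    have e2 : (∑ k, (B *ᵥ eVec A i) k ^ 2) = (B *ᵥ eVec A i) ⬝ᵥ (B *ᵥ eVec A i) := by
      simp [dotProduct, sq]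
    rw [e1, e2] at hcs
    have h3 : (uVec A i ⬝ᵥ (B *ᵥ eVec A i)) ^ 2 ≤ 1 := by
      calc (uVec A i ⬝ᵥ (B *ᵥ eVec A i)) ^ 2 = (∑ k, uVec A i k * (B *ᵥ eVec A i) k) ^ 2 := rfl
        _ ≤ (uVec A i ⬝ᵥ uVec A i) * ((B *ᵥ eVec A i) ⬝ᵥ (B *ᵥ eVec A i)) := hcs
        _ ≤ 1 := by nlinarith [dot_self_nonneg (uVec A i), dot_self_nonneg (B *ᵥ eVec A i)]
    nlinarith [h3]
  exact mul_le_of_le_one_right hσ key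

noncomputable def Bopt : Matrix (Fin m₁) (Fin m₂) ℝ :=
  Matrix.of fun k l => ∑ i, uVec A i k * eVec A i l

lemma Bopt_mulVec (w : Fin m₂ → ℝ) :
    Bopt A *ᵥ w = fun k => ∑ i, (eVec A i ⬝ᵥ w) * uVec A i k := by
  ext k
  simp only [mulVec, dotProduct, Bopt, Matrix.of_apply, Finset.sum_mul, Finset.mul_sum]
  rw [Finset.sum_comm]
  apply Finset.sum_congr rfl; intro i _
  apply Finset.sum_congr rfl; intro l _
  ring

lemma ip_Bopt : ipF A (Bopt A) = nucNorm A := by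
  unfold ipF nucNorm
  calc ∑ k, ∑ l, A k l * Bopt A k l
      = ∑ k, ∑ i, ∑ l, uVec A i k * (A k l * eVec A i l) := by
        apply Finset.sum_congr rfl; intro k _
        simp only [Bopt, Matrix.of_apply, Finset.mul_sum]
        rw [Finset.sum_comm]
        apply Finset.sum_congr rfl; intro i _
        apply Finset.sum_congr rfl; intro l _
        ring
    _ = ∑ i, uVec A i ⬝ᵥ (A *ᵥ eVec A i) := by
        rw [Finset.sum_comm]
        apply Finset.sum_congr rfl; intro i _
        simp only [dotProduct, mulVec, Finset.mul_sum]
    _ = ∑ i, singVals A i := by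
        apply Finset.sum_congr rfl; intro i _
        rw [mulVec_eVec_eq, dotProduct_smul, smul_eq_mul, uVec_dot]
        by_cases h : singVals A i = 0
        · rw [if_neg (fun hc => hc.2 h)]
          simp [h]
        · rw [if_pos ⟨rfl, h⟩]; ring

lemma contr_Bopt : Contr (Bopt A) := by
  intro w
  rw [Bopt_mulVec]
  have expand : (fun k => ∑ i, (eVec A i ⬝ᵥ w) * uVec A i k)
      ⬝ᵥ (fun k => ∑ i, (eVec A i ⬝ᵥ w) * uVec A i k)
      = ∑ i, ∑ j, (eVec A i ⬝ᵥ w) * (eVec A j ⬝ᵥ w) * (uVec A i ⬝ᵥ uVec A j) := by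
    calc (fun k => ∑ i, (eVec A i ⬝ᵥ w) * uVec A i k)
        ⬝ᵥ (fun k => ∑ i, (eVec A i ⬝ᵥ w) * uVec A i k)
        = ∑ k, ∑ i, ∑ j, ((eVec A i ⬝ᵥ w) * uVec A i k) * ((eVec A j ⬝ᵥ w) * uVec A j k) := by
          apply Finset.sum_congr rfl; intro k _
          rw [Finset.sum_mul_sum]
      _ = ∑ i, ∑ k, ∑ j, ((eVec A i ⬝ᵥ w) * uVec A i k) * ((eVec A j ⬝ᵥ w) * uVec A j k) :=
          Finset.sum_comm
      _ = ∑ i, ∑ j, ∑ k, ((eVec A i ⬝ᵥ w) * uVec A i k) * ((eVec A j ⬝ᵥ w) * uVec A j k) := by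
          exact Finset.sum_congr rfl fun i _ => Finset.sum_comm
      _ = ∑ i, ∑ j, (eVec A i ⬝ᵥ w) * (eVec A j ⬝ᵥ w) * (uVec A i ⬝ᵥ uVec A j) := by
          apply Finset.sum_congr rfl; intro i _
          apply Finset.sum_congr rfl; intro j _
          have hd : uVec A i ⬝ᵥ uVec A j = ∑ k, uVec A i k * uVec A j k := rfl
          rw [hd, Finset.mul_sum]
          apply Finset.sum_congr rfl; intro k _
          ring
  rw [expand]
  have step : ∀ i, (∑ j, (eVec A i ⬝ᵥ w) * (eVec A j ⬝ᵥ w) * (uVec A i ⬝ᵥ uVec A j))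
      ≤ (eVec A i ⬝ᵥ w) * (eVec A i ⬝ᵥ w) := by
    intro i
    have : ∀ j, (eVec A i ⬝ᵥ w) * (eVec A j ⬝ᵥ w) * (uVec A i ⬝ᵥ uVec A j)
        = if j = i then ((eVec A i ⬝ᵥ w) * (eVec A i ⬝ᵥ w)) * (if singVals A i ≠ 0 then 1 else 0) else 0 := by
      intro j
      rw [uVec_dot]
      by_cases h : i = j
      · subst h
        by_cases h2 : singVals A i ≠ 0 <;> simp [h2]
      · rw [if_neg (fun hc : i = j ∧ _ => h hc.1), if_neg (Ne.symm h)]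
        ring
    rw [Finset.sum_congr rfl (fun j _ => this j), Finset.sum_ite_eq' Finset.univ i]
    simp only [Finset.mem_univ, if_true]
    by_cases h2 : singVals A i ≠ 0 <;> simp [h2, mul_self_nonneg]
  calc ∑ i, ∑ j, (eVec A i ⬝ᵥ w) * (eVec A j ⬝ᵥ w) * (uVec A i ⬝ᵥ uVec A j)
      ≤ ∑ i, (eVec A i ⬝ᵥ w) * (eVec A i ⬝ᵥ w) := Finset.sum_le_sum fun i _ => step i
    _ = w ⬝ᵥ w := by
        rw [eVec_parseval A w w]
        apply Finset.sum_congr rfl; intro i _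
        rw [dotProduct_comm (eVec A i) w]

end eig2

lemma ip_trace {p q : ℕ} (A B : Matrix (Fin p) (Fin q) ℝ) : ipF A B = Matrix.trace (Aᵀ * B) := by
  unfold ipF Matrix.trace
  simp only [Matrix.diag, Matrix.mul_apply, Matrix.transpose_apply]
  rw [Finset.sum_comm]

lemma ip_sub_left {p q : ℕ} (A B C : Matrix (Fin p) (Fin q) ℝ) :
    ipF (A - B) C = ipF A C - ipF B C := by
  simp [ipF, Matrix.sub_apply, sub_mul, Finset.sum_sub_distrib]

lemma ip_neg_right {p q : ℕ} (A C : Matrix (Fin p) (Fin q) ℝ) : ipF A (-C) = -ipF A C := by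
  simp [ipF, mul_neg]

lemma contr_mul {p q r : ℕ} {M : Matrix (Fin p) (Fin q) ℝ} {N : Matrix (Fin q) (Fin r) ℝ}
    (hM : Contr M) (hN : Contr N) : Contr (M * N) := by
  intro v
  rw [← mulVec_mulVec]
  exact le_trans (hM _) (hN v)

lemma contr_neg {p q : ℕ} {M : Matrix (Fin p) (Fin q) ℝ} (hM : Contr M) : Contr (-M) := by
  intro v
  rw [neg_mulVec]
  simpa using hM v

lemma contr_projM {k : ℕ} (S : Submodule ℝ (EuclideanSpace ℝ (Fin k))) : Contr (projM S) :=
  fun v => projM_contr S v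

lemma projM_transpose {k : ℕ} (S : Submodule ℝ (EuclideanSpace ℝ (Fin k))) :
    (projM S)ᵀ = projM S := by
  ext i j; rw [Matrix.transpose_apply]; exact projM_symm S j i

lemma ip_sandwich {p q : ℕ} (P : Matrix (Fin p) (Fin p) ℝ) (Y B : Matrix (Fin p) (Fin q) ℝ)
    (Q : Matrix (Fin q) (Fin q) ℝ) (hP : Pᵀ = P) (hQ : Qᵀ = Q) :
    ipF (P * Y * Q) B = ipF Y (P * B * Q) := by
  rw [ip_trace, ip_trace]
  calc Matrix.trace ((P * Y * Q)ᵀ * B)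
      = Matrix.trace (Q * (Yᵀ * (P * B))) := by
        rw [Matrix.transpose_mul, Matrix.transpose_mul, hP, hQ]
        simp only [Matrix.mul_assoc]
    _ = Matrix.trace ((Yᵀ * (P * B)) * Q) := (Matrix.trace_mul_comm _ _).symm
    _ = Matrix.trace (Yᵀ * (P * B * Q)) := by simp only [Matrix.mul_assoc]

lemma mul_projM_fix {m₁ m₂ : ℕ} (X : Matrix (Fin m₁) (Fin m₂) ℝ) :
    X * projM (colSpace Xᵀ) = X := by
  have h := projM_fix_mul Xᵀ
  have h2 := congrArg Matrix.transpose h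
  rwa [Matrix.transpose_mul, Matrix.transpose_transpose, projM_transpose] at h2

end NucAux

/-- Lemma 1(iii): `‖X‖_{σ,1} - ‖X̃‖_{σ,1} ≤ ‖P_X(X̃ - X)‖_{σ,1}`. -/
theorem nucNorm_sub_le_Ppar (m₁ m₂ : ℕ) (X Xt : Matrix (Fin m₁) (Fin m₂) ℝ) :
    nucNorm X - nucNorm Xt ≤ nucNorm (Ppar X (Xt - X)) := by
  have hP1 : (projM (colSpace X))ᵀ = projM (colSpace X) := NucAux.projM_transpose _
  have hP2 : (projM (colSpace Xᵀ))ᵀ = projM (colSpace Xᵀ) := NucAux.projM_transpose _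
  set D := Ppar X (Xt - X) with hD
  have hid : projM (colSpace X) * (Xt - D) * projM (colSpace Xᵀ) = X := by
    have h1 : Xt - D = X + Pperp X (Xt - X) := by
      rw [hD]
      simp only [Ppar]
      abel
    rw [h1, Matrix.mul_add, Matrix.add_mul]
    have h2 : projM (colSpace X) * X * projM (colSpace Xᵀ) = X := by
      rw [NucAux.projM_fix_mul, NucAux.mul_projM_fix]
    have h3 : projM (colSpace X) * Pperp X (Xt - X) * projM (colSpace Xᵀ) = 0 := by
      simp only [Pperp]
      calc projM (colSpace X) * (projM (Submodule.orthogonal (colSpace X)) * (Xt - X)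
            * projM (Submodule.orthogonal (colSpace Xᵀ))) * projM (colSpace Xᵀ)
          = (projM (colSpace X) * projM (Submodule.orthogonal (colSpace X)))
            * ((Xt - X) * (projM (Submodule.orthogonal (colSpace Xᵀ)) * projM (colSpace Xᵀ))) := by
            simp only [Matrix.mul_assoc]
        _ = 0 := by rw [NucAux.projM_mul_orthogonal]; simp
    rw [h2, h3, add_zero]
  have e1 : nucNorm X = NucAux.ipF X (NucAux.Bopt X) := (NucAux.ip_Bopt X).symm
  have e2 := NucAux.ip_sandwich (projM (colSpace X)) (Xt - D) (NucAux.Bopt X)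
    (projM (colSpace Xᵀ)) hP1 hP2
  rw [hid] at e2
  set C := projM (colSpace X) * NucAux.Bopt X * projM (colSpace Xᵀ) with hC
  have hCc : NucAux.Contr C :=
    NucAux.contr_mul (NucAux.contr_mul (NucAux.contr_projM _) (NucAux.contr_Bopt X))
      (NucAux.contr_projM _)
  have e3 : NucAux.ipF (Xt - D) C = NucAux.ipF Xt C - NucAux.ipF D C := NucAux.ip_sub_left _ _ _
  have e4 : NucAux.ipF Xt C ≤ nucNorm Xt := NucAux.dual_le Xt C hCc
  have e5 : NucAux.ipF D (-C) ≤ nucNorm D := NucAux.dual_le D (-C) (NucAux.contr_neg hCc)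
  have e6 : NucAux.ipF D (-C) = -NucAux.ipF D C := NucAux.ip_neg_right _ _
  linarith
end
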